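/- Let n ≥ 2, let A = (a_{ij}) be a symmetric positive-definite real n×n matrix, let β be a linear form on ℝⁿ, and let t be a symmetric bilinear form on ℝⁿ. Suppose there exist a linear form f on ℝⁿ and a constant γ ∈ ℝ such that t(y,y) = (f(y) + γ·α(y))·(α(y) − β(y)) for all y ∈ ℝⁿ. Then t(y,y) = γ·(α(y)² − β(y)²) for all y (and f = γβ). -/

import Mathlib

open scoped BigOperators

noncomputable section

/-- `α(y) = √(a_{ij} yⁱ yʲ)`. -/
def alphaOf {n : ℕ} (A : Matrix (Fin n) (Fin n) ℝ) (y : Fin n → ℝ) : ℝ :=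
  Real.sqrt (∑ i, ∑ j, A i j * y i * y j)

/-- Lemma 3.4: if `t₀₀ = (f + γα)(α − β)` identically in `y`
(the meaning of `t₀₀ ≡ 0 mod (1−s)`), then `t₀₀ = γ(α² − β²)` and `f = γβ`. -/
theorem stmt_5 {n : ℕ} (hn : 2 ≤ n) (A : Matrix (Fin n) (Fin n) ℝ)
    (hsym : A.IsSymm) (hpos : A.PosDef)
    (b : Fin n → ℝ) (t : Matrix (Fin n) (Fin n) ℝ) (ht : t.IsSymm)
    (f : Fin n → ℝ) (γ : ℝ)
    (h : ∀ y : Fin n → ℝ,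
      (∑ i, ∑ j, t i j * y i * y j) =
        ((∑ i, f i * y i) + γ * alphaOf A y) * (alphaOf A y - ∑ i, b i * y i)) :
    (∀ y : Fin n → ℝ,
      (∑ i, ∑ j, t i j * y i * y j) = γ * ((alphaOf A y)^2 - (∑ i, b i * y i)^2)) ∧
    (∀ i, f i = γ * b i) := by
  -- α(-y) = α(y)
  have halpha_neg : ∀ y : Fin n → ℝ, alphaOf A (-y) = alphaOf A y := by
    intro y
    unfold alphaOf
    congr 1
    apply Finset.sum_congr rfl
    intro i _
    apply Finset.sum_congr rfl
    intro j _
    simp [Pi.neg_apply]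
  -- positivity of the quadratic form
  have hαpos : ∀ y : Fin n → ℝ, y ≠ 0 → 0 < alphaOf A y := by
    intro y hy
    have := hpos.dotProduct_mulVec_pos hy
    simp only [RCLike.re_to_real, dotProduct, Matrix.mulVec, star_trivial] at this
    have hsum : (0 : ℝ) < ∑ i, ∑ j, A i j * y i * y j := by
      refine this.trans_eq ?_
      apply Finset.sum_congr rfl
      intro i _
      rw [Finset.mul_sum]
      apply Finset.sum_congr rfl
      intro j _
      ring
    exact Real.sqrt_pos.mpr hsum
  -- key: f(y) = γ b(y) for all y
  have hkey : ∀ y : Fin n → ℝ, (∑ i, f i * y i) = γ * (∑ i, b i * y i) := by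
    intro y
    by_cases hy : y = 0
    · simp [hy]
    · have e1 := h y
      have e2 := h (-y)
      rw [halpha_neg] at e2
      have hQ : (∑ i, ∑ j, t i j * (-y) i * (-y) j) = ∑ i, ∑ j, t i j * y i * y j := by
        apply Finset.sum_congr rfl
        intro i _
        apply Finset.sum_congr rfl
        intro j _
        simp [Pi.neg_apply]
      rw [hQ] at e2
      have hF : (∑ i, f i * (-y) i) = -∑ i, f i * y i := by
        rw [← Finset.sum_neg_distrib]
        apply Finset.sum_congr rfl
        intro i _
        simp
      have hB : (∑ i, b i * (-y) i) = -∑ i, b i * y i := by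
        rw [← Finset.sum_neg_distrib]
        apply Finset.sum_congr rfl
        intro i _
        simp
      rw [hF, hB] at e2
      have h3 : alphaOf A y * ((∑ i, f i * y i) - γ * (∑ i, b i * y i)) = 0 := by
        linear_combination (1/2 : ℝ) * e2 - (1/2 : ℝ) * e1
      rcases mul_eq_zero.mp h3 with h4 | h4
      · exact absurd h4 (ne_of_gt (hαpos y hy))
      · linarith
  constructor
  · intro y
    have e1 := h y
    have e2 := hkey y
    linear_combination e1 + (alphaOf A y - ∑ i, b i * y i) * e2
  · intro i
    have := hkey (Pi.single i 1)
    simpa [Pi.single_apply, Finset.mul_sum, mul_ite] using this
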